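/- Let H be a Hopf algebra over a commutative ring with adjoint bracket [h,g] = Σ h₍₁₎ g S(h₍₂₎). Then the 'braided Jacobi' identities hold: (L1) [ξ, [η, ζ]] = Σ [[ξ₍₁₎, η], [ξ₍₂₎, ζ]] and (L2) [[ξ, η], ζ] = Σ [ξ₍₁₎, [η, [S(ξ₍₂₎), ζ]]] for all ξ, η, ζ ∈ H. -/

import Mathlib

open TensorProduct

variable (k : Type*) [CommRing k] (H : Type*) [Ring H] [HopfAlgebra k H]

/-- The adjoint action of a Hopf algebra on itself, as a linear map on the tensor square:
`adjT (h ⊗ g) = Σ h₍₁₎ g S(h₍₂₎)`. -/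
noncomputable def adjT : H ⊗[k] H →ₗ[k] H :=
  LinearMap.mul' k H ∘ₗ
  LinearMap.rTensor H (LinearMap.mul' k H) ∘ₗ
  (TensorProduct.assoc k H H H).symm.toLinearMap ∘ₗ
  LinearMap.lTensor H (TensorProduct.comm k H H).toLinearMap ∘ₗ
  (TensorProduct.assoc k H H H).toLinearMap ∘ₗ
  LinearMap.rTensor H (LinearMap.lTensor H (HopfAlgebra.antipode (R := k))) ∘ₗ
  LinearMap.rTensor H (Coalgebra.comul (R := k))

/-- `adjL g : h ↦ [h, g]`. -/
noncomputable def adjL (g : H) : H →ₗ[k] H :=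
  adjT k H ∘ₗ (TensorProduct.mk k H H).flip g

/-- `adjR h : g ↦ [h, g]`. -/
noncomputable def adjR (h : H) : H →ₗ[k] H :=
  adjT k H ∘ₗ TensorProduct.mk k H H h

section Aux

open Coalgebra HopfAlgebra LinearMap

variable {k H}

/-- A representation of `comul (a*b)` built from representations of `comul a`, `comul b`. -/
noncomputable def mulRepr {ι κ : Type*} {a b : H} (r1 : Coalgebra.Repr k a ι)
    (r2 : Coalgebra.Repr k b κ) :
    Coalgebra.Repr k (a * b) (ι × κ) where
  index := r1.index ×ˢ r2.index
  left := fun p => r1.left p.1 * r2.left p.2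
  right := fun p => r1.right p.1 * r2.right p.2
  eq := by
    rw [Bialgebra.comul_mul, ← r1.eq, ← r2.eq, Finset.sum_mul_sum, Finset.sum_product]
    simp [Algebra.TensorProduct.tmul_mul_tmul]

lemma sum_counit_smul {ι : Type*} {a : H} (r : Coalgebra.Repr k a ι) :
    ∑ i ∈ r.index, counit (R := k) (r.left i) • r.right i = a := by
  have := congrArg (TensorProduct.lid k H) (Coalgebra.sum_counit_tmul_eq r)
  simp only [map_sum, lid_tmul] at this
  simpa using this

lemma sum_smul_counit {ι : Type*} {a : H} (r : Coalgebra.Repr k a ι) :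
    ∑ i ∈ r.index, counit (R := k) (r.right i) • r.left i = a := by
  have := congrArg (TensorProduct.rid k H) (Coalgebra.sum_tmul_counit_eq r)
  simp only [map_sum, rid_tmul] at this
  simpa using this

lemma sum_mul_mul_antipode {ι κ : Type*} {x y : H} (r1 : Coalgebra.Repr k x ι)
    (r2 : Coalgebra.Repr k y κ) :
    ∑ p ∈ r1.index, ∑ q ∈ r2.index,
      r1.left p * (r2.left q * antipode (R := k) (r1.right p * r2.right q)) =
      algebraMap k H (counit (R := k) x * counit (R := k) y) := by
  rw [← Finset.sum_product']
  have := sum_mul_antipode_eq_algebraMap_counit (R := k) (mulRepr r1 r2)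
  simpa [mulRepr, Bialgebra.counit_mul, mul_assoc] using this

/-- The antipode of a Hopf algebra is antimultiplicative. -/
lemma antipode_mul' (a b : H) :
    antipode (R := k) (a * b) = antipode (R := k) b * antipode (R := k) a := by
  set ra := ℛ k a with hra
  set rb := ℛ k b with hrb
  set ra1 : ∀ i, Coalgebra.Repr k (ra.left i) (H × H) := fun i => ℛ k (ra.left i) with hra1
  set ra2 : ∀ i, Coalgebra.Repr k (ra.right i) (H × H) := fun i => ℛ k (ra.right i) with hra2
  set rb1 : ∀ j, Coalgebra.Repr k (rb.left j) (H × H) := fun j => ℛ k (rb.left j) with hrb1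
  set rb2 : ∀ j, Coalgebra.Repr k (rb.right j) (H × H) := fun j => ℛ k (rb.right j) with hrb2
  set T : H := ∑ j ∈ rb.index, ∑ q ∈ (rb2 j).index, ∑ i ∈ ra.index, ∑ p ∈ (ra2 i).index,
      antipode (R := k) (rb.left j) * (antipode (R := k) (ra.left i) *
        ((ra2 i).left p * ((rb2 j).left q *
          antipode (R := k) ((ra2 i).right p * (rb2 j).right q)))) with hT
  have hSb : ∑ j ∈ rb.index, counit (R := k) (rb.right j) • antipode (R := k) (rb.left j) =
      antipode (R := k) b := by
    have := congrArg (antipode (R := k)) (sum_smul_counit (k := k) rb)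
    simp only [map_sum, map_smul] at this
    exact this
  have hSa : ∑ i ∈ ra.index, counit (R := k) (ra.right i) • antipode (R := k) (ra.left i) =
      antipode (R := k) a := by
    have := congrArg (antipode (R := k)) (sum_smul_counit (k := k) ra)
    simp only [map_sum, map_smul] at this
    exact this
  have claim1 : T = antipode (R := k) b * antipode (R := k) a := by
    calc T = ∑ j ∈ rb.index, ∑ i ∈ ra.index,
        antipode (R := k) (rb.left j) * (antipode (R := k) (ra.left i) *
          algebraMap k H (counit (R := k) (ra.right i) * counit (R := k) (rb.right j))) := by
          rw [hT]
          refine Finset.sum_congr rfl fun j _ => ?_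
          rw [Finset.sum_comm]
          refine Finset.sum_congr rfl fun i _ => ?_
          simp only [← Finset.mul_sum]
          rw [Finset.sum_comm, sum_mul_mul_antipode (ra2 i) (rb2 j)]
      _ = (∑ j ∈ rb.index, counit (R := k) (rb.right j) • antipode (R := k) (rb.left j)) *
          (∑ i ∈ ra.index, counit (R := k) (ra.right i) • antipode (R := k) (ra.left i)) := by
          rw [Finset.sum_mul_sum]
          refine Finset.sum_congr rfl fun j _ => Finset.sum_congr rfl fun i _ => ?_
          simp only [Algebra.algebraMap_eq_smul_one, mul_smul_comm, smul_mul_assoc, smul_smul,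
            mul_one]
          try congr 1
          try ring
      _ = antipode (R := k) b * antipode (R := k) a := by rw [hSb, hSa]
  have stepA : ∀ (j : rb.ι) (q : (rb2 j).ι),
      (∑ i ∈ ra.index, ∑ p ∈ (ra2 i).index,
        antipode (R := k) (rb.left j) * (antipode (R := k) (ra.left i) *
          ((ra2 i).left p * ((rb2 j).left q *
            antipode (R := k) ((ra2 i).right p * (rb2 j).right q))))) =
      antipode (R := k) (rb.left j) * ((rb2 j).left q *
        antipode (R := k) (a * (rb2 j).right q)) := by
    intro j q
    have hc := Coalgebra.sum_map_tmul_tmul_eq (R := k)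
      (antipode (R := k)) (LinearMap.id : H →ₗ[k] H)
      (antipode (R := k) ∘ₗ LinearMap.mulRight k ((rb2 j).right q)) a
      (repr := ra) (a₁ := ra1) (a₂ := ra2)
    have hc' := congrArg (fun z => (LinearMap.mulLeft k (antipode (R := k) (rb.left j)) ∘ₗ
      LinearMap.mul' k H ∘ₗ
      lTensor H (LinearMap.mul' k H ∘ₗ lTensor H (LinearMap.mulLeft k ((rb2 j).left q)))) z) hc
    simp only [map_sum, LinearMap.comp_apply, lTensor_tmul, LinearMap.mul'_apply,
      LinearMap.mulLeft_apply, LinearMap.mulRight_apply, LinearMap.id_coe, id_eq] at hc'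
    rw [hc']
    calc ∑ i ∈ ra.index, ∑ p ∈ (ra1 i).index,
        antipode (R := k) (rb.left j) * (antipode (R := k) ((ra1 i).left p) *
          ((ra1 i).right p * ((rb2 j).left q *
            antipode (R := k) (ra.right i * (rb2 j).right q)))) =
        ∑ i ∈ ra.index, counit (R := k) (ra.left i) •
          (antipode (R := k) (rb.left j) * ((rb2 j).left q *
            antipode (R := k) (ra.right i * (rb2 j).right q))) := by
          refine Finset.sum_congr rfl fun i _ => ?_
          simp only [← Finset.mul_sum]
          rw [show (∑ p ∈ (ra1 i).index, antipode (R := k) ((ra1 i).left p) *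
              ((ra1 i).right p * ((rb2 j).left q *
                antipode (R := k) (ra.right i * (rb2 j).right q)))) =
              (∑ p ∈ (ra1 i).index, antipode (R := k) ((ra1 i).left p) * (ra1 i).right p) *
              ((rb2 j).left q * antipode (R := k) (ra.right i * (rb2 j).right q)) by
            rw [Finset.sum_mul]
            exact Finset.sum_congr rfl fun p _ => (mul_assoc _ _ _).symm]
          rw [sum_antipode_mul_eq_algebraMap_counit (R := k) (ra1 i), ← Algebra.smul_def, mul_smul_comm]
      _ = antipode (R := k) (rb.left j) * ((rb2 j).left q *
            antipode (R := k) (a * (rb2 j).right q)) := by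
          have := congrArg (fun z => (LinearMap.mulLeft k (antipode (R := k) (rb.left j)) ∘ₗ
            LinearMap.mulLeft k ((rb2 j).left q) ∘ₗ antipode (R := k) ∘ₗ
            LinearMap.mulRight k ((rb2 j).right q)) z) (sum_counit_smul (k := k) ra)
          simp only [map_sum, map_smul, LinearMap.comp_apply, LinearMap.mulLeft_apply,
            LinearMap.mulRight_apply] at this
          exact this
  have claim2 : T = antipode (R := k) (a * b) := by
    rw [hT]
    calc (∑ j ∈ rb.index, ∑ q ∈ (rb2 j).index, ∑ i ∈ ra.index, ∑ p ∈ (ra2 i).index,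
        antipode (R := k) (rb.left j) * (antipode (R := k) (ra.left i) *
          ((ra2 i).left p * ((rb2 j).left q *
            antipode (R := k) ((ra2 i).right p * (rb2 j).right q))))) =
        ∑ j ∈ rb.index, ∑ q ∈ (rb2 j).index,
          antipode (R := k) (rb.left j) * ((rb2 j).left q *
            antipode (R := k) (a * (rb2 j).right q)) := by
          exact Finset.sum_congr rfl fun j _ => Finset.sum_congr rfl fun q _ => stepA j q
      _ = antipode (R := k) (a * b) := by
          have hc := Coalgebra.sum_map_tmul_tmul_eq (R := k)
            (antipode (R := k)) (LinearMap.id : H →ₗ[k] H)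
            (antipode (R := k) ∘ₗ LinearMap.mulLeft k a) b
            (repr := rb) (a₁ := rb1) (a₂ := rb2)
          have hc' := congrArg (fun z => (LinearMap.mul' k H ∘ₗ
            lTensor H (LinearMap.mul' k H)) z) hc
          simp only [map_sum, LinearMap.comp_apply, lTensor_tmul, LinearMap.mul'_apply,
            LinearMap.mulLeft_apply, LinearMap.id_coe, id_eq] at hc'
          rw [hc']
          calc ∑ j ∈ rb.index, ∑ q ∈ (rb1 j).index,
              antipode (R := k) ((rb1 j).left q) * ((rb1 j).right q *
                antipode (R := k) (a * rb.right j)) =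
              ∑ j ∈ rb.index, counit (R := k) (rb.left j) •
                antipode (R := k) (a * rb.right j) := by
                refine Finset.sum_congr rfl fun j _ => ?_
                rw [show (∑ q ∈ (rb1 j).index, antipode (R := k) ((rb1 j).left q) *
                    ((rb1 j).right q * antipode (R := k) (a * rb.right j))) =
                    (∑ q ∈ (rb1 j).index, antipode (R := k) ((rb1 j).left q) * (rb1 j).right q) *
                    antipode (R := k) (a * rb.right j) by
                  rw [Finset.sum_mul]
                  exact Finset.sum_congr rfl fun qq _ => (mul_assoc _ _ _).symm]
                rw [sum_antipode_mul_eq_algebraMap_counit (R := k) (rb1 j), ← Algebra.smul_def]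
            _ = antipode (R := k) (a * b) := by
                have := congrArg (fun z => (antipode (R := k) ∘ₗ LinearMap.mulLeft k a) z)
                  (sum_counit_smul (k := k) rb)
                simp only [map_sum, map_smul, LinearMap.comp_apply,
                  LinearMap.mulLeft_apply] at this
                exact this
  rw [← claim2, claim1]

lemma adjT_tmul {ι : Type*} (h g : H) (r : Coalgebra.Repr k h ι) :
    adjT k H (h ⊗ₜ[k] g) =
      ∑ i ∈ r.index, r.left i * g * antipode (R := k) (r.right i) := by
  simp only [adjT, LinearMap.comp_apply, LinearMap.rTensor_tmul, ← r.eq]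
  simp [TensorProduct.sum_tmul, mul_assoc]

/-- The adjoint bracket is an action: `[x*y, z] = [x, [y, z]]`. -/
lemma adjT_mul_tmul (x y z : H) :
    adjT k H ((x * y) ⊗ₜ[k] z) = adjT k H (x ⊗ₜ[k] adjT k H (y ⊗ₜ[k] z)) := by
  rw [adjT_tmul (x * y) z (mulRepr (ℛ k x) (ℛ k y)),
    adjT_tmul x (adjT k H (y ⊗ₜ[k] z)) (ℛ k x), adjT_tmul y z (ℛ k y)]
  simp only [mulRepr]
  rw [Finset.sum_product]
  simp only [antipode_mul', Finset.sum_mul, Finset.mul_sum, mul_assoc]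

/-- `Σ [ξ₍₁₎, g] ξ₍₂₎ = ξ g`. -/
lemma sum_adjT_mul {ι κ Λ : Type*} (g : H) {x : H} (r : Coalgebra.Repr k x ι)
    (r1 : ∀ i, Coalgebra.Repr k (r.left i) κ) (r2 : ∀ i, Coalgebra.Repr k (r.right i) Λ) :
    ∑ i ∈ r.index, adjT k H (r.left i ⊗ₜ[k] g) * r.right i = x * g := by
  have hc := Coalgebra.sum_map_tmul_tmul_eq (R := k)
    (LinearMap.id : H →ₗ[k] H) (antipode (R := k)) (LinearMap.id : H →ₗ[k] H) x
    (repr := r) (a₁ := r1) (a₂ := r2)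
  have hc' := congrArg (fun z => (LinearMap.mul' k H ∘ₗ
    lTensor H (LinearMap.mulLeft k g ∘ₗ LinearMap.mul' k H)) z) hc
  simp only [map_sum, LinearMap.comp_apply, lTensor_tmul, LinearMap.mul'_apply,
    LinearMap.mulLeft_apply, LinearMap.id_coe, id_eq] at hc'
  calc ∑ i ∈ r.index, adjT k H (r.left i ⊗ₜ[k] g) * r.right i =
      ∑ i ∈ r.index, ∑ p ∈ (r1 i).index,
        (r1 i).left p * (g * (antipode (R := k) ((r1 i).right p) * r.right i)) := by
        refine Finset.sum_congr rfl fun i _ => ?_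
        rw [adjT_tmul (r.left i) g (r1 i), Finset.sum_mul]
        exact Finset.sum_congr rfl fun p _ => by rw [mul_assoc, mul_assoc]
    _ = ∑ i ∈ r.index, ∑ p ∈ (r2 i).index,
        r.left i * (g * (antipode (R := k) ((r2 i).left p) * (r2 i).right p)) := hc'.symm
    _ = ∑ i ∈ r.index, counit (R := k) (r.right i) • (r.left i * g) := by
        refine Finset.sum_congr rfl fun i _ => ?_
        simp only [← Finset.mul_sum]
        rw [sum_antipode_mul_eq_algebraMap_counit (R := k) (r2 i), ← Algebra.commutes, ← Algebra.smul_def,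
          mul_smul_comm]
    _ = x * g := by
        rw [show (∑ i ∈ r.index, counit (R := k) (r.right i) • (r.left i * g)) =
            (∑ i ∈ r.index, counit (R := k) (r.right i) • r.left i) * g by
          rw [Finset.sum_mul]
          exact Finset.sum_congr rfl fun i _ => (smul_mul_assoc _ _ _).symm]
        rw [sum_smul_counit r]

end Aux

open Coalgebra HopfAlgebra in
/-- The braided Jacobi identities for the adjoint bracket `[h,g] = Σ h₍₁₎ g S(h₍₂₎)` of a
Hopf algebra: (L1) `[ξ, [η, ζ]] = Σ [[ξ₍₁₎, η], [ξ₍₂₎, ζ]]` and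
(L2) `[[ξ, η], ζ] = Σ [ξ₍₁₎, [η, [S(ξ₍₂₎), ζ]]]`. -/
theorem adjoint_bracket_braided_jacobi :
    (∀ ξ η ζ : H,
      adjT k H (ξ ⊗ₜ[k] adjT k H (η ⊗ₜ[k] ζ)) =
        adjT k H
          (TensorProduct.map (adjL k H η) (adjL k H ζ) (Coalgebra.comul (R := k) ξ))) ∧
    (∀ ξ η ζ : H,
      adjT k H (adjT k H (ξ ⊗ₜ[k] η) ⊗ₜ[k] ζ) =
        adjT k H
          (TensorProduct.map LinearMap.id
            (adjR k H η ∘ₗ adjL k H ζ ∘ₗ HopfAlgebra.antipode (R := k))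
            (Coalgebra.comul (R := k) ξ))) := by
  constructor
  · intro ξ η ζ
    have hr := (ℛ k ξ).eq
    rw [← hr, map_sum, map_sum]
    simp only [TensorProduct.map_tmul, adjL, LinearMap.comp_apply, LinearMap.flip_apply,
      TensorProduct.mk_apply]
    calc adjT k H (ξ ⊗ₜ[k] adjT k H (η ⊗ₜ[k] ζ))
        = adjT k H ((ξ * η) ⊗ₜ[k] ζ) := (adjT_mul_tmul ξ η ζ).symm
      _ = adjT k H ((∑ i ∈ (ℛ k ξ).index,
            adjT k H ((ℛ k ξ).left i ⊗ₜ[k] η) * (ℛ k ξ).right i) ⊗ₜ[k] ζ) := by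
          rw [sum_adjT_mul η (ℛ k ξ) (fun i => ℛ k ((ℛ k ξ).left i))
            (fun i => ℛ k ((ℛ k ξ).right i))]
      _ = ∑ i ∈ (ℛ k ξ).index,
            adjT k H (adjT k H ((ℛ k ξ).left i ⊗ₜ[k] η) ⊗ₜ[k] adjT k H ((ℛ k ξ).right i ⊗ₜ[k] ζ)) := by
          rw [TensorProduct.sum_tmul, map_sum]
          exact Finset.sum_congr rfl fun i _ => adjT_mul_tmul _ _ _
  · intro ξ η ζ
    have hr := (ℛ k ξ).eq
    rw [← hr, map_sum, map_sum]
    simp only [TensorProduct.map_tmul, adjL, adjR, LinearMap.comp_apply, LinearMap.flip_apply,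
      TensorProduct.mk_apply, LinearMap.id_coe, id_eq]
    calc adjT k H (adjT k H (ξ ⊗ₜ[k] η) ⊗ₜ[k] ζ)
        = adjT k H ((∑ i ∈ (ℛ k ξ).index,
            (ℛ k ξ).left i * η * antipode (R := k) ((ℛ k ξ).right i)) ⊗ₜ[k] ζ) := by
          rw [adjT_tmul ξ η (ℛ k ξ)]
      _ = ∑ i ∈ (ℛ k ξ).index,
            adjT k H ((ℛ k ξ).left i ⊗ₜ[k]
              adjT k H (η ⊗ₜ[k] adjT k H (antipode (R := k) ((ℛ k ξ).right i) ⊗ₜ[k] ζ))) := by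
          rw [TensorProduct.sum_tmul, map_sum]
          refine Finset.sum_congr rfl fun i _ => ?_
          rw [← adjT_mul_tmul, ← adjT_mul_tmul, mul_assoc]
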